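/- Let ρ_Ψ and ρ_Φ be n×n Hermitian matrices with eigenvalues in [0,1] and equal trace. If λ(ρ_Ψ) ≺ λ(ρ_Φ) (decreasingly sorted eigenvalues), then λ(D_Ψ) ≺ λ(D_Φ), where D = ρ ⊕ (I − ρᵀ) is the extended 2n×2n matrix with spectrum (λ(ρ), 1−λ(ρ)). -/

import Mathlib

open Matrix
open scoped ComplexOrder

/-- Partial sum of the first `m` entries of a vector. -/
def pSum {N : ℕ} (x : Fin N → ℝ) (m : ℕ) : ℝ :=
  ∑ i : Fin N, if (i : ℕ) < m then x i else 0

/-- Majorization for (decreasingly sorted) vectors. -/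
def Maj {N : ℕ} (x y : Fin N → ℝ) : Prop :=
  (∀ m : ℕ, pSum x m ≤ pSum y m) ∧ (∑ i, x i) = (∑ i, y i)

/-- The extended 2n×2n single-particle density matrix D = ρ ⊕ (1 − ρᵀ). -/
def extD {n : ℕ} (ρ : Matrix (Fin n) (Fin n) ℂ) :
    Matrix (Fin n ⊕ Fin n) (Fin n ⊕ Fin n) ℂ :=
  Matrix.fromBlocks ρ 0 0 (1 - ρᵀ)

open Polynomial

-- multiset helpers
lemma exists_le_map {α β : Type*} [DecidableEq α] [DecidableEq β] (f : α → β) :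
    ∀ (u : Multiset β) (s : Multiset α), u ≤ s.map f → ∃ t, t ≤ s ∧ t.map f = u := by
  intro u
  induction u using Multiset.induction with
  | empty => exact fun s _ => ⟨0, Multiset.zero_le _, rfl⟩
  | cons b u ih =>
    intro s h
    have hb : b ∈ s.map f := Multiset.mem_of_le h (Multiset.mem_cons_self _ _)
    obtain ⟨a, ha, rfl⟩ := Multiset.mem_map.mp hb
    have hu : u ≤ (s.erase a).map f := by
      have h2 := Multiset.erase_le_erase (f a) h
      rw [Multiset.erase_cons_head] at h2
      rwa [← Multiset.cons_erase ha, Multiset.map_cons, Multiset.erase_cons_head] at h2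
    obtain ⟨t, ht, rfl⟩ := ih _ hu
    refine ⟨a ::ₘ t, ?_, by rw [Multiset.map_cons]⟩
    calc a ::ₘ t ≤ a ::ₘ s.erase a := Multiset.cons_le_cons _ ht
    _ = s := Multiset.cons_erase ha

lemma exists_split {α : Type*} [DecidableEq α] (u s t : Multiset α) (h : u ≤ s + t) :
    ∃ u₁ u₂, u₁ ≤ s ∧ u₂ ≤ t ∧ u = u₁ + u₂ := by
  refine ⟨u ∩ s, u - s, Multiset.inter_le_right, ?_, ?_⟩
  · rw [Multiset.sub_le_iff_le_add]
    rwa [add_comm]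
  · refine Multiset.ext.mpr fun a => ?_
    have := Multiset.count_le_of_le a h
    rw [Multiset.count_add] at this ⊢
    rw [Multiset.count_inter, Multiset.count_sub]
    omega


lemma pSum_eq_sum_filter {N : ℕ} (x : Fin N → ℝ) (m : ℕ) :
    pSum x m = ∑ i ∈ Finset.univ.filter (fun i : Fin N => (i : ℕ) < m), x i := by
  rw [pSum, Finset.sum_filter]

lemma filter_lt_eq_map {N m : ℕ} (h : m ≤ N) :
    Finset.univ.filter (fun i : Fin N => (i : ℕ) < m)
      = Finset.map (Fin.castLEEmb h) Finset.univ := by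
  ext i
  simp only [Finset.mem_filter, Finset.mem_univ, true_and, Finset.mem_map]
  constructor
  · intro hi
    exact ⟨⟨(i : ℕ), hi⟩, by simp⟩
  · rintro ⟨j, -, rfl⟩
    simp [j.isLt]

lemma card_filter_lt {N m : ℕ} (h : m ≤ N) :
    (Finset.univ.filter (fun i : Fin N => (i : ℕ) < m)).card = m := by
  rw [filter_lt_eq_map h, Finset.card_map, Finset.card_univ, Fintype.card_fin]

lemma pSum_of_ge {N m : ℕ} (x : Fin N → ℝ) (h : N ≤ m) : pSum x m = ∑ i, x i := by
  rw [pSum]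
  refine Finset.sum_congr rfl fun i _ => ?_
  rw [if_pos (lt_of_lt_of_le i.isLt h)]

lemma fin_strictMono_le {m N : ℕ} {g : Fin m → Fin N} (hg : StrictMono g) :
    ∀ (v : ℕ) (hv : v < m), v ≤ (g ⟨v, hv⟩ : ℕ) := by
  intro v
  induction v with
  | zero => exact fun _ => Nat.zero_le _
  | succ v ih =>
    intro hv
    have hv' : v < m := Nat.lt_of_succ_lt hv
    have h1 := ih hv'
    have h2 : g ⟨v, hv'⟩ < g ⟨v + 1, hv⟩ := hg (by simp [Fin.lt_def])
    rw [Fin.lt_def] at h2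
    omega

lemma sum_le_pSum {N : ℕ} {x : Fin N → ℝ} (hx : Antitone x) (A : Finset (Fin N)) :
    ∑ i ∈ A, x i ≤ pSum x A.card := by
  have hcard : A.card ≤ N := by
    simpa using Finset.card_le_card (Finset.subset_univ A)
  set m := A.card with hm
  have e := A.orderIsoOfFin hm.symm
  have hsum : ∑ i ∈ A, x i = ∑ j : Fin m, x (e j) := by
    rw [← Finset.sum_coe_sort A x]
    exact (Equiv.sum_comp e.toEquiv (fun a : A => x a)).symm
  rw [hsum, pSum_eq_sum_filter, filter_lt_eq_map hcard, Finset.sum_map]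
  refine Finset.sum_le_sum fun j _ => ?_
  refine hx ?_
  have hmono : StrictMono (fun j : Fin m => ((e j : Fin N))) :=
    fun a b hab => by exact_mod_cast e.strictMono hab
  have := fin_strictMono_le hmono (j : ℕ) j.isLt
  rw [Fin.le_def]
  simpa using this

lemma msum_le_pSum {N : ℕ} {x : Fin N → ℝ} (hx : Antitone x) (u : Multiset ℝ)
    (hu : u ≤ Multiset.map x Finset.univ.val) :
    u.sum ≤ pSum x (Multiset.card u) := by
  obtain ⟨t, ht, rfl⟩ := exists_le_map x u Finset.univ.val hu
  have hnd : t.Nodup := Multiset.nodup_of_le ht Finset.univ.nodup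
  have : (Multiset.map x t).sum = ∑ i ∈ (⟨t, hnd⟩ : Finset (Fin N)), x i := rfl
  rw [this, Multiset.card_map]
  exact sum_le_pSum hx _

lemma map_rev_univ {n : ℕ} (g : Fin n → ℝ) :
    Multiset.map (fun i => g (Fin.rev i)) Finset.univ.val = Multiset.map g Finset.univ.val := by
  have h : Multiset.map (⇑Fin.revPerm) (Finset.univ.val : Multiset (Fin n)) = Finset.univ.val := by
    have := congr_arg Finset.val (Finset.map_univ_equiv (Fin.revPerm (n := n)))
    simp only [Finset.map_val, Equiv.coe_toEmbedding] at this
    exact this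
  calc Multiset.map (fun i => g (Fin.rev i)) Finset.univ.val
      = Multiset.map g (Multiset.map (⇑Fin.revPerm) Finset.univ.val) := by
        rw [Multiset.map_map]; rfl
    _ = Multiset.map g Finset.univ.val := by rw [h]

lemma pSum_rev {n : ℕ} (a : Fin n → ℝ) {j : ℕ} (hj : j ≤ n) :
    pSum (fun i => 1 - a (Fin.rev i)) j = (j : ℝ) - (∑ i, a i) + pSum a (n - j) := by
  have h1 : pSum (fun i => 1 - a (Fin.rev i)) j
      = (∑ i : Fin n, if (i : ℕ) < j then (1:ℝ) else 0)
        - ∑ i : Fin n, if (i : ℕ) < j then a (Fin.rev i) else 0 := by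
    rw [pSum, ← Finset.sum_sub_distrib]
    refine Finset.sum_congr rfl fun i _ => ?_
    split_ifs <;> ring
  have h2 : (∑ i : Fin n, if (i : ℕ) < j then (1:ℝ) else 0) = (j : ℝ) := by
    rw [Finset.sum_boole, card_filter_lt hj]
  have h3 : (∑ i : Fin n, if (i : ℕ) < j then a (Fin.rev i) else 0)
      = ∑ i : Fin n, if ((Fin.rev i : Fin n) : ℕ) < j then a i else 0 := by
    refine Fintype.sum_equiv Fin.revPerm _ _ fun i => ?_
    simp
  have h4 : (∑ i : Fin n, if ((Fin.rev i : Fin n) : ℕ) < j then a i else 0)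
      = (∑ i, a i) - pSum a (n - j) := by
    rw [pSum, ← Finset.sum_sub_distrib]
    refine Finset.sum_congr rfl fun i _ => ?_
    have hi : (i : ℕ) < n := i.isLt
    have hrev : ((Fin.rev i : Fin n) : ℕ) = n - 1 - (i : ℕ) := by
      rw [Fin.val_rev]; omega
    rw [hrev]
    rcases lt_or_ge (i : ℕ) (n - j) with hc | hc
    · rw [if_neg (by omega), if_pos hc]; ring
    · rw [if_pos (by omega), if_neg (by omega)]; ring
  rw [h1, h2, h3, h4]; ring

lemma antitone_one_sub_rev {n : ℕ} {a : Fin n → ℝ} (ha : Antitone a) :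
    Antitone (fun i => 1 - a (Fin.rev i)) := by
  intro i j hij
  simp only
  have : Fin.rev j ≤ Fin.rev i := Fin.rev_le_rev.mpr hij
  have := ha this
  linarith

lemma maj_extend {n : ℕ} (a b : Fin n → ℝ) (ha : Antitone a) (hb : Antitone b)
    (hab : ∀ m, pSum a m ≤ pSum b m) (hsum : ∑ i, a i = ∑ i, b i)
    (x y : Fin (2 * n) → ℝ) (hy : Antitone y)
    (hmx : Multiset.map x Finset.univ.val =
      Multiset.map a Finset.univ.val + Multiset.map (fun i => 1 - a i) Finset.univ.val)
    (hmy : Multiset.map y Finset.univ.val =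
      Multiset.map b Finset.univ.val + Multiset.map (fun i => 1 - b i) Finset.univ.val) :
    (∀ m, pSum x m ≤ pSum y m) ∧ (∑ i, x i) = (∑ i, y i) := by
  have hsumx : (∑ i, x i) = (∑ i, a i) + ∑ i : Fin n, (1 - a i) := by
    have : (∑ i, x i) = (Multiset.map x Finset.univ.val).sum := rfl
    rw [this, hmx, Multiset.sum_add]; rfl
  have hsumy : (∑ i, y i) = (∑ i, b i) + ∑ i : Fin n, (1 - b i) := by
    have : (∑ i, y i) = (Multiset.map y Finset.univ.val).sum := rfl
    rw [this, hmy, Multiset.sum_add]; rfl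
  have hsub_a : ∑ i : Fin n, (1 - a i) = (n : ℝ) - ∑ i, a i := by
    rw [Finset.sum_sub_distrib]; simp
  have hsub_b : ∑ i : Fin n, (1 - b i) = (n : ℝ) - ∑ i, b i := by
    rw [Finset.sum_sub_distrib]; simp
  have htot : (∑ i, x i) = (∑ i, y i) := by
    rw [hsumx, hsumy, hsub_a, hsub_b]; ring
  refine ⟨fun m => ?_, htot⟩
  rcases le_or_gt (2 * n) m with hm | hm
  · rw [pSum_of_ge x hm, pSum_of_ge y hm, htot]
  have hm' : m ≤ 2 * n := hm.le
  -- the top-m part of x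
  set F := Finset.univ.filter (fun i : Fin (2 * n) => (i : ℕ) < m) with hF
  have hu0sum : (Multiset.map x F.val).sum = pSum x m := by
    rw [pSum_eq_sum_filter]; rfl
  have hu0card : Multiset.card (Multiset.map x F.val) = m := by
    rw [Multiset.card_map]
    exact card_filter_lt hm'
  have hu0le : Multiset.map x F.val ≤
      Multiset.map a Finset.univ.val + Multiset.map (fun i => 1 - a i) Finset.univ.val := by
    rw [← hmx]
    exact Multiset.map_le_map (Finset.val_le_iff.mpr (Finset.filter_subset _ _))
  obtain ⟨t₁, t₂, ht₁, ht₂, hsplit⟩ := exists_split _ _ _ hu0le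
  set k := Multiset.card t₁ with hk
  set j := Multiset.card t₂ with hj
  have hkn : k ≤ n := by
    have := Multiset.card_le_card ht₁
    simpa [Multiset.card_map] using this
  have hjn : j ≤ n := by
    have := Multiset.card_le_card ht₂
    simpa [Multiset.card_map] using this
  have hkj : k + j = m := by
    rw [← hu0card, hsplit, Multiset.card_add]
  have hb1 : t₁.sum ≤ pSum a k := msum_le_pSum ha t₁ ht₁
  have hb2 : t₂.sum ≤ pSum (fun i => 1 - a (Fin.rev i)) j := by
    refine msum_le_pSum (antitone_one_sub_rev ha) t₂ ?_
    rwa [map_rev_univ (fun i => 1 - a i)]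
  rw [pSum_rev a hjn] at hb2
  -- now the y side
  set G₁ := Finset.univ.filter (fun i : Fin n => (i : ℕ) < k) with hG₁
  set G₂ := Finset.univ.filter (fun i : Fin n => (i : ℕ) < j) with hG₂
  set u' := Multiset.map b G₁.val + Multiset.map (fun i => 1 - b (Fin.rev i)) G₂.val with hu'
  have hu'card : Multiset.card u' = m := by
    have e1 : Multiset.card G₁.val = k := by
      rw [show Multiset.card G₁.val = G₁.card from rfl, hG₁, card_filter_lt hkn]
    have e2 : Multiset.card G₂.val = j := by
      rw [show Multiset.card G₂.val = G₂.card from rfl, hG₂, card_filter_lt hjn]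
    rw [hu', Multiset.card_add, Multiset.card_map, Multiset.card_map, e1, e2, hkj]
  have hu'le : u' ≤ Multiset.map y Finset.univ.val := by
    rw [hmy, hu']
    refine add_le_add ?_ ?_
    · exact le_trans (Multiset.map_le_map (Finset.val_le_iff.mpr (Finset.filter_subset _ _)))
        le_rfl
    · rw [← map_rev_univ (fun i => 1 - b i)]
      exact Multiset.map_le_map (Finset.val_le_iff.mpr (Finset.filter_subset _ _))
  have hu'sum : u'.sum = pSum b k + pSum (fun i => 1 - b (Fin.rev i)) j := by
    rw [hu', Multiset.sum_add]
    congr 1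
    · rw [pSum_eq_sum_filter]; rfl
    · rw [pSum_eq_sum_filter]; rfl
  have hy_bound := msum_le_pSum hy u' hu'le
  rw [hu'card, hu'sum, pSum_rev b hjn] at hy_bound
  have hx_eq : pSum x m = t₁.sum + t₂.sum := by
    rw [← hu0sum, hsplit, Multiset.sum_add]
  have h1 := hab k
  have h2 := hab (n - j)
  calc pSum x m = t₁.sum + t₂.sum := hx_eq
    _ ≤ pSum a k + ((j : ℝ) - (∑ i, a i) + pSum a (n - j)) := add_le_add hb1 hb2
    _ ≤ pSum b k + ((j : ℝ) - (∑ i, b i) + pSum b (n - j)) := by rw [hsum]; linarith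
    _ ≤ pSum y m := hy_bound

section Spectra
variable {m : Type*} [Fintype m] [DecidableEq m]

lemma charpoly_unitary_conj (U A : Matrix m m ℂ) (hU : U ∈ Matrix.unitaryGroup m ℂ) :
    (U * A * star U).charpoly = A.charpoly := by
  have hU1 : U * star U = 1 := (Matrix.mem_unitaryGroup_iff).mp hU
  have hU2 : star U * U = 1 := mul_eq_one_comm.mp hU1
  set C' : Matrix m m ℂ →+* Matrix m m ℂ[X] := (Polynomial.C : ℂ →+* ℂ[X]).mapMatrix with hC'
  have key : charmatrix (U * A * star U) = C' U * charmatrix A * C' (star U) := by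
    rw [charmatrix, charmatrix, mul_sub, sub_mul]
    congr 1
    · have hcomm : Matrix.scalar m (Polynomial.X : ℂ[X]) * C' (star U)
          = C' (star U) * Matrix.scalar m (Polynomial.X : ℂ[X]) :=
        (Matrix.scalar_commute _ (fun r' => Commute.all _ _) _)
      rw [mul_assoc, hcomm, ← mul_assoc, ← _root_.map_mul, hU1, _root_.map_one, one_mul]
    · rw [← _root_.map_mul, ← _root_.map_mul]
  rw [Matrix.charpoly, key, Matrix.det_mul, Matrix.det_mul, mul_comm, ← mul_assoc,
    ← Matrix.det_mul,
    show C' (star U) * C' U = (1 : Matrix m m ℂ[X]) by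
      rw [← _root_.map_mul, hU2, _root_.map_one],
    Matrix.det_one, one_mul]
  rfl

lemma charpoly_diagonal_c (d : m → ℂ) :
    (Matrix.diagonal d).charpoly = ∏ i, (Polynomial.X - Polynomial.C (d i)) := by
  rw [Matrix.charpoly]
  have : charmatrix (Matrix.diagonal d)
      = Matrix.diagonal (fun i => Polynomial.X - Polynomial.C (d i)) := by
    ext i j
    by_cases h : i = j
    · subst h; simp
    · simp [h, Matrix.diagonal_apply_ne _ h]
  rw [this, Matrix.det_diagonal]

lemma roots_charpoly_diagonal (d : m → ℂ) :
    (Matrix.diagonal d).charpoly.roots = Multiset.map d Finset.univ.val := by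
  rw [charpoly_diagonal_c]
  have : (∏ i, (Polynomial.X - Polynomial.C (d i)))
      = ((Multiset.map d Finset.univ.val).map fun a => Polynomial.X - Polynomial.C a).prod := by
    rw [Multiset.map_map]
    rfl
  rw [this, Polynomial.roots_multiset_prod_X_sub_C]

lemma charpoly_transpose (A : Matrix m m ℂ) : (Aᵀ).charpoly = A.charpoly := by
  rw [Matrix.charpoly, Matrix.charpoly, ← Matrix.det_transpose (charmatrix A)]
  congr 1
  rw [charmatrix, charmatrix, Matrix.transpose_sub, Matrix.scalar_apply,
    Matrix.diagonal_transpose, RingHom.mapMatrix_apply, RingHom.mapMatrix_apply,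
    Matrix.transpose_map]

end Spectra

section Spectra2
variable {m : Type*} [Fintype m] [DecidableEq m]

lemma roots_charpoly_hermitian (A : Matrix m m ℂ) (hA : A.IsHermitian) :
    A.charpoly.roots = Multiset.map (fun i => (hA.eigenvalues i : ℂ)) Finset.univ.val := by
  have h := congr_arg Matrix.charpoly hA.spectral_theorem
  rw [Unitary.conjStarAlgAut_apply] at h
  rw [charpoly_unitary_conj _ _ (hA.eigenvectorUnitary).prop] at h
  rw [h, roots_charpoly_diagonal]
  rfl

lemma roots_charpoly_one_sub (A : Matrix m m ℂ) (hA : A.IsHermitian) :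
    (1 - A).charpoly.roots
      = Multiset.map (fun i => 1 - (hA.eigenvalues i : ℂ)) Finset.univ.val := by
  set U : Matrix m m ℂ := (hA.eigenvectorUnitary : Matrix m m ℂ) with hUdef
  have hU1 : U * star U = 1 := (Matrix.mem_unitaryGroup_iff).mp hA.eigenvectorUnitary.prop
  have h1 : (1 : Matrix m m ℂ) - A
      = U * Matrix.diagonal (fun i => 1 - (hA.eigenvalues i : ℂ)) * star U := by
    have hdiag : Matrix.diagonal (fun i => 1 - (hA.eigenvalues i : ℂ))
        = 1 - Matrix.diagonal (RCLike.ofReal ∘ hA.eigenvalues) := by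
      rw [← Matrix.diagonal_one, Matrix.diagonal_sub]
      rfl
    rw [hdiag, Matrix.mul_sub, Matrix.sub_mul, Matrix.mul_one, hU1]
    congr 1
    exact hA.spectral_theorem
  rw [congr_arg Matrix.charpoly h1,
    charpoly_unitary_conj _ _ (hA.eigenvectorUnitary).prop, roots_charpoly_diagonal]

end Spectra2


lemma eigenvalues_extD_multiset {n : ℕ} (ρ : Matrix (Fin n) (Fin n) ℂ) (hρ : ρ.IsHermitian)
    (hD : (extD ρ).IsHermitian) :
    Multiset.map hD.eigenvalues Finset.univ.val
      = Multiset.map hρ.eigenvalues Finset.univ.val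
        + Multiset.map (fun i => 1 - hρ.eigenvalues i) Finset.univ.val := by
  have hC : Multiset.map (fun i => (hD.eigenvalues i : ℂ)) Finset.univ.val
      = Multiset.map (fun i => (hρ.eigenvalues i : ℂ)) Finset.univ.val
        + Multiset.map (fun i => 1 - (hρ.eigenvalues i : ℂ)) Finset.univ.val := by
    rw [← roots_charpoly_hermitian _ hD]
    have h2 : (extD ρ).charpoly = ρ.charpoly * (1 - ρ).charpoly := by
      rw [extD, Matrix.charpoly_fromBlocks_zero₂₁]
      congr 1
      rw [show (1 : Matrix (Fin n) (Fin n) ℂ) - ρᵀ = (1 - ρ)ᵀ by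
        rw [Matrix.transpose_sub, Matrix.transpose_one], _root_.charpoly_transpose]
    rw [h2, Polynomial.roots_mul (mul_ne_zero (Matrix.charpoly_monic _).ne_zero
      (Matrix.charpoly_monic _).ne_zero), roots_charpoly_hermitian _ hρ,
      roots_charpoly_one_sub _ hρ]
  apply Multiset.map_injective (Complex.ofReal_injective)
  rw [Multiset.map_add, Multiset.map_map, Multiset.map_map, Multiset.map_map]
  have e1 : ((↑) : ℝ → ℂ) ∘ hD.eigenvalues = fun i => (hD.eigenvalues i : ℂ) := rfl
  have e2 : ((↑) : ℝ → ℂ) ∘ hρ.eigenvalues = fun i => (hρ.eigenvalues i : ℂ) := rfl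
  have e3 : ((↑) : ℝ → ℂ) ∘ (fun i => 1 - hρ.eigenvalues i)
      = fun i => 1 - (hρ.eigenvalues i : ℂ) := by
    funext i; simp [Function.comp]
  rw [e1, e2, e3, hC]

lemma map_comp_equiv_univ {α β γ : Type*} [Fintype α] [Fintype β] (e : α ≃ β) (g : β → γ) :
    Multiset.map (fun i => g (e i)) Finset.univ.val = Multiset.map g Finset.univ.val := by
  have h : Multiset.map (⇑e) (Finset.univ.val : Multiset α) = Finset.univ.val := by
    have := congr_arg Finset.val (Finset.map_univ_equiv e)
    simp only [Finset.map_val, Equiv.coe_toEmbedding] at this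
    exact this
  rw [← h, Multiset.map_map]
  rfl



/-- main -/
theorem extended_majorization {n : ℕ} (ρΨ ρΦ : Matrix (Fin n) (Fin n) ℂ)
    (hΨ : ρΨ.IsHermitian) (hΦ : ρΦ.IsHermitian)
    (hΨ0 : ρΨ.PosSemidef) (hΨ1 : (1 - ρΨ).PosSemidef)
    (hΦ0 : ρΦ.PosSemidef) (hΦ1 : (1 - ρΦ).PosSemidef)
    (htr : ρΨ.trace = ρΦ.trace)
    (hDΨ : (extD ρΨ).IsHermitian) (hDΦ : (extD ρΦ).IsHermitian)
    (lamΨ lamΦ : Fin n → ℝ)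
    (hlamΨ : Antitone lamΨ ∧ ∃ σ : Equiv.Perm (Fin n), ∀ i, lamΨ i = hΨ.eigenvalues (σ i))
    (hlamΦ : Antitone lamΦ ∧ ∃ σ : Equiv.Perm (Fin n), ∀ i, lamΦ i = hΦ.eigenvalues (σ i))
    (hmaj : Maj lamΨ lamΦ)
    (dΨ dΦ : Fin (2 * n) → ℝ)
    (hdΨ : Antitone dΨ ∧ ∃ e : Fin (2 * n) ≃ (Fin n ⊕ Fin n), ∀ i, dΨ i = hDΨ.eigenvalues (e i))
    (hdΦ : Antitone dΦ ∧ ∃ e : Fin (2 * n) ≃ (Fin n ⊕ Fin n), ∀ i, dΦ i = hDΦ.eigenvalues (e i)) :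
    Maj dΨ dΦ := by
  obtain ⟨hdΨ_anti, eΨ, heΨ⟩ := hdΨ
  obtain ⟨hdΦ_anti, eΦ, heΦ⟩ := hdΦ
  obtain ⟨hlamΨ_anti, σΨ, hσΨ⟩ := hlamΨ
  obtain ⟨hlamΦ_anti, σΦ, hσΦ⟩ := hlamΦ
  have key : ∀ (ρ : Matrix (Fin n) (Fin n) ℂ) (hρ : ρ.IsHermitian)
      (hD : (extD ρ).IsHermitian) (lam : Fin n → ℝ) (d : Fin (2 * n) → ℝ)
      (e : Fin (2 * n) ≃ (Fin n ⊕ Fin n)) (he : ∀ i, d i = hD.eigenvalues (e i))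
      (σ : Equiv.Perm (Fin n)) (hσ : ∀ i, lam i = hρ.eigenvalues (σ i)),
      Multiset.map d Finset.univ.val =
        Multiset.map lam Finset.univ.val
          + Multiset.map (fun i => 1 - lam i) Finset.univ.val := by
    intro ρ hρ hD lam d e he σ hσ
    have h1 : Multiset.map d Finset.univ.val
        = Multiset.map hD.eigenvalues Finset.univ.val := by
      rw [Multiset.map_congr rfl (fun i _ => he i)]
      exact map_comp_equiv_univ e hD.eigenvalues
    have h2 : Multiset.map lam Finset.univ.val
        = Multiset.map hρ.eigenvalues Finset.univ.val := by
      rw [Multiset.map_congr rfl (fun i _ => hσ i)]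
      exact map_comp_equiv_univ σ hρ.eigenvalues
    have h3 : Multiset.map (fun i => 1 - lam i) Finset.univ.val
        = Multiset.map (fun i => 1 - hρ.eigenvalues i) Finset.univ.val := by
      rw [Multiset.map_congr rfl (fun i _ => by rw [hσ i])]
      exact map_comp_equiv_univ σ (fun i => 1 - hρ.eigenvalues i)
    rw [h1, h2, h3, eigenvalues_extD_multiset ρ hρ hD]
  have hmx := key ρΨ hΨ hDΨ lamΨ dΨ eΨ heΨ σΨ hσΨ
  have hmy := key ρΦ hΦ hDΦ lamΦ dΦ eΦ heΦ σΦ hσΦ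
  exact maj_extend lamΨ lamΦ hlamΨ_anti hlamΦ_anti hmaj.1 hmaj.2 dΨ dΦ hdΦ_anti hmx hmy
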